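/- Let K be a field of characteristic 0 and j ∈ AGL(1,K) the involution x ↦ −x. Then any two involutions s, t ∈ AGL(1,K) with s, t ≠ j satisfy Centralizer(js) = Centralizer(jt); i.e. all involutions distinct from j are equivalent under the relation ≈_j. -/

import Mathlib

def IsInvolution {G : Type*} [Group G] (g : G) : Prop := g * g = 1 ∧ g ≠ 1

section
variable {K : Type*} [Field K] [CharZero K]

lemma aff_decomp (f : K ≃ᵃ[K] K) (x : K) : f x = f.linear x + f 0 := by
  simpa [vadd_eq_add] using f.map_vadd 0 x

lemma lin_smul (f : K ≃ᵃ[K] K) (x : K) : f.linear x = x * f.linear 1 := by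
  have := f.linear.map_smul x 1
  simpa [smul_eq_mul] using this

lemma inv_form (j : K ≃ᵃ[K] K) (hj : ∀ x : K, j x = -x)
    (s : K ≃ᵃ[K] K) (hs : IsInvolution s) (hsj : s ≠ j) :
    ∃ c : K, c ≠ 0 ∧ ∀ x, (j * s) x = x + c := by
  set a := s 0 with ha
  set b := s.linear 1 with hb
  have hss : ∀ x, s (s x) = x := by
    intro x
    have := congrArg (fun f : K ≃ᵃ[K] K => f x) hs.1
    simpa using this
  have hform : ∀ x, s x = x * b + a := fun x => by
    rw [aff_decomp s x, lin_smul]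
  have h0 : a * b + a = 0 := by
    have := hss 0
    rw [hform, hform] at this; simpa using this
  have h1 : b * b = 1 := by
    have := hss 1
    rw [hform, hform] at this
    linear_combination this - h0
  have hbm : b = -1 := by
    rcases mul_self_eq_one_iff.mp h1 with h | h
    · exfalso
      apply hs.2
      rw [h] at h0
      have ha0 : a = 0 := by linear_combination h0 / 2
      ext x
      simp [hform x, h, ha0]
    · exact h
  have ha0 : a ≠ 0 := by
    intro h
    apply hsj
    ext x
    rw [hform x, hbm, hj, h]; ring
  refine ⟨-a, neg_ne_zero.mpr ha0, fun x => ?_⟩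
  show j (s x) = x + -a
  rw [hform x, hbm, hj]; ring

lemma cent_mem (u : K ≃ᵃ[K] K) (c : K) (hc : c ≠ 0) (hu : ∀ x, u x = x + c)
    (g : K ≃ᵃ[K] K) :
    g ∈ Subgroup.centralizer {u} ↔ g.linear 1 = 1 := by
  rw [Subgroup.mem_centralizer_singleton_iff]
  constructor
  · intro h
    have := congrArg (fun f : K ≃ᵃ[K] K => f 0) h
    have h1 : g (u 0) = u (g 0) := this
    rw [hu, hu] at h1
    rw [zero_add, aff_decomp g c, lin_smul] at h1
    have h2 : c * g.linear 1 = c * 1 := by linear_combination h1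
    exact mul_left_cancel₀ hc h2
  · intro h
    ext x
    show g (u x) = u (g x)
    rw [hu, hu, aff_decomp g (x + c), aff_decomp g x, g.linear.map_add, lin_smul g c, h]
    ring

end

/-- In `AGL(1,K)` with `j : x ↦ −x`, any two involutions `s, t ≠ j` satisfy
`Centralizer(js) = Centralizer(jt)`. -/
theorem agl_all_involutions_equivalent {K : Type*} [Field K] [CharZero K]
    (j : K ≃ᵃ[K] K) (hj : ∀ x : K, j x = -x)
    (s t : K ≃ᵃ[K] K) (hs : IsInvolution s) (ht : IsInvolution t)
    (hsj : s ≠ j) (htj : t ≠ j) :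
    Subgroup.centralizer {j * s} = Subgroup.centralizer {j * t} := by
  obtain ⟨c, hc, hcu⟩ := inv_form j hj s hs hsj
  obtain ⟨d, hd, hdu⟩ := inv_form j hj t ht htj
  ext g
  rw [cent_mem _ c hc hcu, cent_mem _ d hd hdu]
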